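/- In Minkowski ℝ³, for a point p ≪-below a null hyperplane: (t,x,y) satisfies t < cos θ·(x-x₀) + sin θ·(y-y₀) if and only if (t,x,y) lies in the chronological past of some point on the null geodesic τ ↦ (τ, x₀ + τ cos θ, y₀ + τ sin θ). -/

import Mathlib

/-- Chronological relation in 3-dimensional Minkowski space: `p ≪ q` iff `q - p` is
future-directed timelike. -/
def chron (p q : ℝ × ℝ × ℝ) : Prop :=
  0 < q.1 - p.1 ∧ (q.2.1 - p.2.1) ^ 2 + (q.2.2 - p.2.2) ^ 2 < (q.1 - p.1) ^ 2

/-- A point `(t,x,y)` of `ℝ³` satisfies `t < cos θ (x-x₀) + sin θ (y-y₀)` iff it lies in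
the chronological past of some point of the null geodesic
`τ ↦ (τ, x₀ + τ cos θ, y₀ + τ sin θ)`. -/
theorem past_of_null_geodesic_halfspace (x₀ y₀ θ : ℝ) (p : ℝ × ℝ × ℝ) :
    p.1 < Real.cos θ * (p.2.1 - x₀) + Real.sin θ * (p.2.2 - y₀) ↔
    ∃ τ : ℝ, chron p (τ, x₀ + τ * Real.cos θ, y₀ + τ * Real.sin θ) := by
  obtain ⟨t, x, y⟩ := p
  set c := Real.cos θ
  set s := Real.sin θ
  have hcs : c ^ 2 + s ^ 2 = 1 := by
    simp [c, s, Real.cos_sq_add_sin_sq]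
  simp only [chron]
  constructor
  · intro h
    set d : ℝ := c * (x - x₀) + s * (y - y₀) - t with hd
    have hd0 : 0 < d := by simp only [hd]; linarith
    set K : ℝ := (x - x₀) ^ 2 + (y - y₀) ^ 2 - t ^ 2 with hK
    refine ⟨max (t + 1) (K / (2 * d) + 1), ?_, ?_⟩
    · have := le_max_left (t + 1) (K / (2 * d) + 1)
      linarith
    · have h1 : t + 1 ≤ max (t + 1) (K / (2 * d) + 1) := le_max_left _ _
      have h2 : K / (2 * d) + 1 ≤ max (t + 1) (K / (2 * d) + 1) := le_max_right _ _
      set τ := max (t + 1) (K / (2 * d) + 1)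
      have h3 : K < 2 * d * τ := by
        have : K / (2 * d) ≤ τ - 1 := by linarith
        have := (div_le_iff₀ (by linarith : (0:ℝ) < 2 * d)).mp this
        nlinarith
      have hτ2 : τ ^ 2 * (c ^ 2 + s ^ 2) = τ ^ 2 := by rw [hcs]; ring
      nlinarith [h3, hd0, h1, hτ2]
  · rintro ⟨τ, h1, h2⟩
    set X := x₀ + τ * c - x with hX
    set Y := y₀ + τ * s - y with hY
    have hpy : (c * X + s * Y) ^ 2 + (s * X - c * Y) ^ 2 = X ^ 2 + Y ^ 2 := by
      linear_combination (X ^ 2 + Y ^ 2) * hcs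
    have hCS : (c * X + s * Y) ^ 2 ≤ X ^ 2 + Y ^ 2 := by
      nlinarith [sq_nonneg (s * X - c * Y)]
    have heq : c * X + s * Y = τ - (c * (x - x₀) + s * (y - y₀)) := by
      rw [hX, hY]; linear_combination τ * hcs
    nlinarith [h1, h2, hCS, heq]
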